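/- Let E be a countable set with at least two elements and let Q be a uniformly bounded intensity matrix on E. Let h > 0 be such that 1 + h·Q(i,i) ≥ h·Q(j,i) for all i,j ∈ E, and let P_h = I + hQ (so P_h is a stochastic matrix). Define Λ₁(Q) = (1/2) inf_{i ≠ j} [ |Q(i,i) − Q(j,i)| + |Q(i,j) − Q(j,j)| − ∑_{s ≠ i, s ≠ j} |Q(i,s) − Q(j,s)| ] and assume 1 − h·Λ₁(Q) ≥ 0. Then the ergodicity coefficient of P_h satisfies Λ₁(P_h) = 1 − h·Λ₁(Q), where Λ₁(P_h) = (1/2) sup_{i,j} ∑_k |P_h(i,k) − P_h(j,k)|. -/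

import Mathlib

open scoped Classical ENNReal NNReal
open Filter MeasureTheory

noncomputable section

variable {E : Type*}

def matPow (P : E → E → ℝ) : ℕ → E → E → ℝ
  | 0 => fun i j => if i = j then (1 : ℝ) else 0
  | n + 1 => fun i j => ∑' k, matPow P n i k * P k j

def IsStochastic (P : E → E → ℝ) : Prop :=
  (∀ i j, 0 ≤ P i j) ∧ ∀ i, ∑' j, P i j = 1

def IsIrred (P : E → E → ℝ) : Prop :=
  ∀ i j, ∃ n, 1 ≤ n ∧ 0 < matPow P n i j

def IsProbVec (π : E → ℝ) : Prop :=
  (∀ i, 0 ≤ π i) ∧ ∑' i, π i = 1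

def InvariantFor (π : E → ℝ) (P : E → E → ℝ) : Prop :=
  ∀ j, HasSum (fun i => π i * P i j) (π j)

def vecNorm (μ : E → ℝ) : ℝ := ∑' i, |μ i|

def rowSumNorm (L : E → E → ℝ) : ℝ := ⨆ i, ∑' j, |L i j|

def ergCoeff (B : E → E → ℝ) : ℝ :=
  (1 / 2) * ⨆ p : E × E, ∑' k, |B p.1 k - B p.2 k|

def IsIntensity (Q : E → E → ℝ) : Prop :=
  (∀ i j, i ≠ j → 0 ≤ Q i j) ∧ ∀ i, HasSum (Q i) 0

def UnifBdd (Q : E → E → ℝ) : Prop := ∃ M : ℝ, ∀ i, -Q i i ≤ M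

def QIrred (Q : E → E → ℝ) : Prop :=
  ∀ i j, i ≠ j → ∃ (r : ℕ) (k : ℕ → E), 1 ≤ r ∧ k 0 = i ∧ k r = j ∧
    ∀ s < r, 0 < Q (k s) (k (s + 1))

def QInvariant (π : E → ℝ) (Q : E → E → ℝ) : Prop :=
  ∀ j, HasSum (fun i => π i * Q i j) 0

def transP (Q : E → E → ℝ) (t : ℝ) : E → E → ℝ :=
  fun i j => ∑' n : ℕ, t ^ n / (Nat.factorial n : ℝ) * matPow Q n i j

def qErgCoeff (Q : E → E → ℝ) : ℝ :=
  (1 / 2) * ⨅ p : {p : E × E // p.1 ≠ p.2},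
    (|Q p.val.1 p.val.1 - Q p.val.2 p.val.1| + |Q p.val.1 p.val.2 - Q p.val.2 p.val.2|
      - ∑' s : E, if s ≠ p.val.1 ∧ s ≠ p.val.2 then |Q p.val.1 s - Q p.val.2 s| else 0)

def vVecNorm (V : E → ℝ) (μ : E → ℝ) : ℝ≥0∞ := ∑' i, ENNReal.ofReal (|μ i| * V i)

def vMatNorm (V : E → ℝ) (L : E → E → ℝ) : ℝ≥0∞ :=
  ⨆ i, (∑' j, ENNReal.ofReal (|L i j| * V j)) / ENNReal.ofReal (V i)

def vOneNorm (V : E → ℝ) : ℝ≥0∞ := ⨆ i, 1 / ENNReal.ofReal (V i)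

private lemma tsum_split2' {E : Type*} {u : E → ℝ} (hu : Summable u) {i j : E} (hij : i ≠ j) :
    ∑' k, u k = u i + u j + ∑' k, (if k ≠ i ∧ k ≠ j then u k else 0) := by
  classical
  have hu2 : Summable (fun k => if k = i then 0 else u k) := by
    have := hu.update i 0
    refine this.congr fun k => ?_
    simp [Function.update_apply]
  have h1 := Summable.tsum_eq_add_tsum_ite hu i
  have h2 := Summable.tsum_eq_add_tsum_ite hu2 j
  have h3 : ∑' k, (if k = j then (0:ℝ) else if k = i then 0 else u k)
      = ∑' k, (if k ≠ i ∧ k ≠ j then u k else 0) := by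
    refine tsum_congr fun k => ?_
    by_cases hki : k = i <;> by_cases hkj : k = j <;> simp [hki, hkj]
  rw [if_neg (Ne.symm hij)] at h2
  rw [h1, h2, h3]
  ring

/-- for P_h = I + hQ, the ergodicity coefficient satisfies
Λ₁(P_h) = 1 − h·Λ₁(Q). -/
theorem stmt16 {E : Type*} [Countable E] [Nontrivial E] (Q : E → E → ℝ) (h : ℝ)
    (hQ : IsIntensity Q) (hQb : UnifBdd Q) (hpos : 0 < h)
    (hstoch : ∀ i j, h * Q j i ≤ 1 + h * Q i i)
    (hnn : 0 ≤ 1 - h * qErgCoeff Q) :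
    ergCoeff (fun i j => (if i = j then (1 : ℝ) else 0) + h * Q i j) =
      1 - h * qErgCoeff Q := by
  classical
  obtain ⟨hQpos, hQsum⟩ := hQ
  set P : E → E → ℝ := fun i j => (if i = j then (1:ℝ) else 0) + h * Q i j with hPdef
  have hsQ : ∀ i, Summable (Q i) := fun i => (hQsum i).summable
  have htQ : ∀ i, ∑' j, Q i j = 0 := fun i => (hQsum i).tsum_eq
  have hdiag : ∀ i, Q i i ≤ 0 := by
    intro i
    have h1 := Summable.tsum_eq_add_tsum_ite (hsQ i) i
    rw [htQ i] at h1
    have h2 : 0 ≤ ∑' x, (if x = i then (0:ℝ) else Q i x) := by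
      refine tsum_nonneg fun k => ?_
      by_cases hk : k = i
      · simp [hk]
      · simp only [if_neg hk]; exact hQpos i k (Ne.symm hk)
    linarith
  -- abbreviation for the tail sum
  set T : E → E → ℝ :=
    fun i j => ∑' s, if s ≠ i ∧ s ≠ j then |Q i s - Q j s| else 0 with hTdef
  have hsub : ∀ i j, Summable (fun s => |Q i s - Q j s|) :=
    fun i j => ((hsQ i).sub (hsQ j)).abs
  have hTsm : ∀ i j, Summable (fun s => if s ≠ i ∧ s ≠ j then |Q i s - Q j s| else 0) := by
    intro i j
    refine Summable.of_nonneg_of_le (fun s => ?_) (fun s => ?_) (hsub i j)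
    · by_cases hs : s ≠ i ∧ s ≠ j <;> simp [hs, abs_nonneg]
    · by_cases hs : s ≠ i ∧ s ≠ j <;> simp [hs, abs_nonneg]
  have hT_le : ∀ i j, i ≠ j → T i j ≤ -(Q i i + Q i j + Q j j + Q j i) := by
    intro i j hij
    have hsum2 : Summable (fun s => Q i s + Q j s) := (hsQ i).add (hsQ j)
    have hmaj : Summable (fun s => if s ≠ i ∧ s ≠ j then Q i s + Q j s else 0) := by
      refine Summable.of_nonneg_of_le (fun s => ?_) (fun s => ?_) (((hsQ i).abs).add ((hsQ j).abs))
      · by_cases hs : s ≠ i ∧ s ≠ j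
        · simp only [if_pos hs]
          exact add_nonneg (hQpos i s (Ne.symm hs.1)) (hQpos j s (Ne.symm hs.2))
        · simp [hs]
      · by_cases hs : s ≠ i ∧ s ≠ j
        · simp only [if_pos hs]
          exact add_le_add (le_abs_self _) (le_abs_self _)
        · simp only [if_neg hs]
          exact add_nonneg (abs_nonneg _) (abs_nonneg _)
    have hle : T i j ≤ ∑' s, (if s ≠ i ∧ s ≠ j then Q i s + Q j s else 0) := by
      rw [hTdef]
      refine Summable.tsum_le_tsum (fun s => ?_) (hTsm i j) hmaj
      by_cases hs : s ≠ i ∧ s ≠ j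
      · simp only [if_pos hs]
        calc |Q i s - Q j s| ≤ |Q i s| + |Q j s| := abs_sub _ _
          _ = Q i s + Q j s := by
              rw [abs_of_nonneg (hQpos i s (Ne.symm hs.1)), abs_of_nonneg (hQpos j s (Ne.symm hs.2))]
      · simp [hs]
    have hsplit := tsum_split2' hsum2 hij
    have hzero : ∑' s, (Q i s + Q j s) = 0 := by
      rw [Summable.tsum_add (hsQ i) (hsQ j), htQ i, htQ j]; ring
    rw [hzero] at hsplit
    linarith
  have habs1 : ∀ i j, i ≠ j → |Q i i - Q j i| = Q j i - Q i i := by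
    intro i j hij
    rw [abs_of_nonpos (by linarith [hdiag i, hQpos j i (Ne.symm hij)])]
    ring
  have habs2 : ∀ i j, i ≠ j → |Q i j - Q j j| = Q i j - Q j j := by
    intro i j hij
    exact abs_of_nonneg (by linarith [hdiag j, hQpos i j hij])
  -- value of the row-difference sum for off-diagonal pairs
  have hgoff : ∀ i j, i ≠ j → (∑' k, |P i k - P j k|)
      = 2 - h * ((Q j i - Q i i) + (Q i j - Q j j) - T i j) := by
    intro i j hij
    have hdelta : ∀ a : E, Summable (fun k => if a = k then (1:ℝ) else 0) := by
      intro a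
      refine ((hasSum_ite_eq a (1:ℝ)).summable).congr fun k => ?_
      simp [eq_comm]
    have hsu : Summable (fun k => |P i k - P j k|) := by
      have : Summable (fun k => P i k - P j k) := by
        have h1 : Summable (fun k => ((if i = k then (1:ℝ) else 0) - (if j = k then (1:ℝ) else 0))
            + h * (Q i k - Q j k)) :=
          ((hdelta i).sub (hdelta j)).add (((hsQ i).sub (hsQ j)).mul_left h)
        refine h1.congr fun k => ?_
        simp only [hPdef]; ring
      exact this.abs
    have hsplit := tsum_split2' hsu hij
    have hui : |P i i - P j i| = 1 + h * Q i i - h * Q j i := by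
      have : P i i - P j i = 1 + h * Q i i - h * Q j i := by
        simp only [hPdef, if_pos rfl, if_neg (Ne.symm hij), if_true]; ring
      rw [this, abs_of_nonneg (by linarith [hstoch i j])]
    have huj : |P i j - P j j| = 1 + h * Q j j - h * Q i j := by
      have : P i j - P j j = h * Q i j - (1 + h * Q j j) := by
        simp only [hPdef, if_pos rfl, if_neg hij, if_true]; ring
      rw [this, abs_of_nonpos (by linarith [hstoch j i])]; ring
    have htail : ∑' k, (if k ≠ i ∧ k ≠ j then |P i k - P j k| else 0) = h * T i j := by
      have heq : ∀ k, (if k ≠ i ∧ k ≠ j then |P i k - P j k| else 0)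
          = h * (if k ≠ i ∧ k ≠ j then |Q i k - Q j k| else 0) := by
        intro k
        by_cases hk : k ≠ i ∧ k ≠ j
        · simp only [if_pos hk]
          have : P i k - P j k = h * (Q i k - Q j k) := by
            simp only [hPdef, if_neg (Ne.symm hk.1), if_neg (Ne.symm hk.2)]; ring
          rw [this, abs_mul, abs_of_pos hpos]
        · simp [hk]
      rw [tsum_congr heq, tsum_mul_left]
    rw [hui, huj, htail] at hsplit
    rw [hsplit]; ring
  -- the infimum defining qErgCoeff
  haveI hne : Nonempty {p : E × E // p.1 ≠ p.2} := by
    obtain ⟨a, b, hab⟩ := exists_pair_ne E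
    exact ⟨⟨(a, b), hab⟩⟩
  set F : {p : E × E // p.1 ≠ p.2} → ℝ := fun q =>
    |Q q.val.1 q.val.1 - Q q.val.2 q.val.1| + |Q q.val.1 q.val.2 - Q q.val.2 q.val.2|
      - ∑' s : E, (if s ≠ q.val.1 ∧ s ≠ q.val.2 then |Q q.val.1 s - Q q.val.2 s| else 0)
    with hFdef
  have hqerg : qErgCoeff Q = (1/2) * ⨅ q, F q := rfl
  have hFalt : ∀ q : {p : E × E // p.1 ≠ p.2},
      F q = (Q q.val.2 q.val.1 - Q q.val.1 q.val.1)
        + (Q q.val.1 q.val.2 - Q q.val.2 q.val.2) - T q.val.1 q.val.2 := by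
    intro q
    rw [hFdef]
    simp only [habs1 _ _ q.prop, habs2 _ _ q.prop, hTdef]
  have hF0 : ∀ q, 0 ≤ F q := by
    intro q
    obtain ⟨⟨i, j⟩, hij⟩ := q
    rw [hFalt]
    simp only
    have h1 := hT_le i j hij
    have h2 := hQpos i j hij
    have h3 := hQpos j i (Ne.symm hij)
    linarith
  set A : ℝ := ⨅ q, F q with hAdef
  have hbddF : BddBelow (Set.range F) := by
    refine ⟨0, ?_⟩
    rintro x ⟨q, rfl⟩
    exact hF0 q
  have hA0 : 0 ≤ A := le_ciInf hF0
  have hAle : ∀ q, A ≤ F q := fun q => ciInf_le hbddF q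
  have hhA2 : h * A ≤ 2 := by
    rw [hqerg] at hnn
    nlinarith
  -- the sup defining ergCoeff
  set g : E × E → ℝ := fun p => ∑' k, |P p.1 k - P p.2 k| with hgdef
  have hFoff : ∀ q : {p : E × E // p.1 ≠ p.2}, g q.val = 2 - h * F q := by
    intro q
    rw [hgdef]
    simp only
    rw [hgoff q.val.1 q.val.2 q.prop, hFalt q]
  have hgdiag : ∀ p : E × E, p.1 = p.2 → g p = 0 := by
    intro p hp
    simp [hgdef, hp]
  have hg2 : ∀ p, g p ≤ 2 := by
    intro p
    by_cases hp : p.1 = p.2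
    · rw [hgdiag p hp]; norm_num
    · rw [hFoff ⟨p, hp⟩]
      have := hF0 ⟨p, hp⟩
      nlinarith
  have hbddg : BddAbove (Set.range g) := by
    refine ⟨2, ?_⟩
    rintro x ⟨p, rfl⟩
    exact hg2 p
  have step1 : (⨆ p, g p) ≤ 2 - h * A := by
    refine ciSup_le fun p => ?_
    by_cases hp : p.1 = p.2
    · rw [hgdiag p hp]; linarith
    · rw [hFoff ⟨p, hp⟩]
      have h1 := hAle ⟨p, hp⟩
      nlinarith
  have step2 : 2 - h * A ≤ ⨆ p, g p := by
    have hle : ∀ q : {p : E × E // p.1 ≠ p.2}, (2 - ⨆ p, g p) / h ≤ F q := by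
      intro q
      have h1 : g q.val ≤ ⨆ p, g p := le_ciSup hbddg q.val
      rw [hFoff q] at h1
      rw [div_le_iff₀ hpos]
      nlinarith
    have h2 : (2 - ⨆ p, g p) / h ≤ A := le_ciInf hle
    rw [div_le_iff₀ hpos] at h2
    nlinarith
  have hsup : (⨆ p, g p) = 2 - h * A := le_antisymm step1 step2
  have herg : ergCoeff P = (1/2) * ⨆ p, g p := rfl
  rw [herg, hsup, hqerg]
  ring

end
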